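/- Let β satisfy 1 < β < 4/3 and let f(x) = tanh(βx) − x. Let x₀ : ℝ → ℝ be a continuous 1-periodic function and let v : ℝ → ℝ be a differentiable 1-periodic function, not identically zero, satisfying v'(t) = f'(x₀(t))·v(t) for all t. Then ∫₀¹ f'''(x₀(s))·v(s)² ds < 0. -/

import Mathlib

open Real

lemma tanh_hasDerivAt' (x : ℝ) :
    HasDerivAt Real.tanh (1 - Real.tanh x ^ 2) x := by
  have hc : Real.cosh x ≠ 0 := (Real.cosh_pos x).ne'
  have h := (Real.hasDerivAt_sinh x).div (Real.hasDerivAt_cosh x) hc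
  have heq : Real.tanh = fun y => Real.sinh y / Real.cosh y := by
    funext y; exact Real.tanh_eq_sinh_div_cosh y
  rw [heq]
  refine h.congr_deriv ?_
  have h1 := Real.cosh_sq_sub_sinh_sq x
  beta_reduce
  field_simp

theorem third_deriv_integral_neg (β : ℝ) (hβ1 : 1 < β) (hβ2 : β < 4/3)
    (f : ℝ → ℝ) (hf : ∀ x, f x = Real.tanh (β * x) - x)
    (x₀ : ℝ → ℝ) (hx₀ : Continuous x₀) (hx₀per : ∀ t, x₀ (t + 1) = x₀ t)
    (v : ℝ → ℝ) (hv : Differentiable ℝ v) (hvper : ∀ t, v (t + 1) = v t)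
    (hvne : ¬ ∀ t, v t = 0)
    (hveq : ∀ t, deriv v t = deriv f (x₀ t) * v t) :
    (∫ s in (0:ℝ)..1, iteratedDeriv 3 f (x₀ s) * v s ^ 2) < 0 := by
  -- derivative of x ↦ tanh (β x)
  have hT : ∀ x : ℝ, HasDerivAt (fun y => Real.tanh (β * y))
      ((1 - Real.tanh (β * x) ^ 2) * β) x := by
    intro x
    have := (tanh_hasDerivAt' (β * x)).comp x ((hasDerivAt_id x).const_mul β)
    exact this.congr_deriv (by ring)
  -- first derivative of f
  have hf1 : ∀ x : ℝ, HasDerivAt f (β - β * Real.tanh (β * x) ^ 2 - 1) x := by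
    intro x
    have heq : f = fun y => Real.tanh (β * y) - y := funext hf
    rw [heq]
    have h := (hT x).sub (hasDerivAt_id x)
    exact h.congr_deriv (by ring)
  have hdf : deriv f = fun x => β - β * Real.tanh (β * x) ^ 2 - 1 :=
    funext fun x => (hf1 x).deriv
  -- second derivative
  have hf2 : ∀ x : ℝ, HasDerivAt (deriv f)
      (-2 * β ^ 2 * Real.tanh (β * x) + 2 * β ^ 2 * Real.tanh (β * x) ^ 3) x := by
    intro x
    rw [hdf]
    have h := (((hT x).pow 2).const_mul β).const_sub β |>.sub_const 1
    exact h.congr_deriv (by norm_num; ring)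
  have hdf2 : deriv (deriv f) =
      fun x => -2 * β ^ 2 * Real.tanh (β * x) + 2 * β ^ 2 * Real.tanh (β * x) ^ 3 :=
    funext fun x => (hf2 x).deriv
  -- third derivative
  have hf3 : ∀ x : ℝ, HasDerivAt (deriv (deriv f))
      (-2 * β ^ 3 * (1 - Real.tanh (β * x) ^ 2) * (1 - 3 * Real.tanh (β * x) ^ 2)) x := by
    intro x
    rw [hdf2]
    have h := ((hT x).const_mul (-2 * β ^ 2)).add (((hT x).pow 3).const_mul (2 * β ^ 2))
    exact h.congr_deriv (by norm_num; ring)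
  have hd3 : ∀ x : ℝ, iteratedDeriv 3 f x =
      -2 * β ^ 3 * (1 - Real.tanh (β * x) ^ 2) * (1 - 3 * Real.tanh (β * x) ^ 2) := by
    intro x
    rw [show (3 : ℕ) = 2 + 1 from rfl, iteratedDeriv_succ, iteratedDeriv_succ,
      iteratedDeriv_one]
    exact (hf3 x).deriv
  -- deriv v as a continuous function
  have hdv : deriv v = fun t => (β - β * Real.tanh (β * x₀ t) ^ 2 - 1) * v t := by
    funext t; rw [hveq t, hdf]
  have hdvc : Continuous (deriv v) := by
    rw [hdv]
    have hct : Continuous Real.tanh := by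
      have : Real.tanh = fun y => Real.sinh y / Real.cosh y := by
        funext y; exact Real.tanh_eq_sinh_div_cosh y
      rw [this]
      exact Real.continuous_sinh.div Real.continuous_cosh fun x => (Real.cosh_pos x).ne'
    exact ((continuous_const.sub (continuous_const.mul
      ((hct.comp (continuous_const.mul hx₀)).pow 2))).sub
      continuous_const).mul hv.continuous
  -- pointwise identity
  have hpt : ∀ s : ℝ, iteratedDeriv 3 f (x₀ s) * v s ^ 2 =
      -6 * β * deriv v s ^ 2 + (-2 * β * (6 - 2 * β)) * (deriv v s * v s)
        + (-2 * β * (3 - 2 * β)) * v s ^ 2 := by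
    intro s
    rw [hd3, hveq s, hdf]
    ring
  -- integrability
  have hi1 : IntervalIntegrable (fun s => -6 * β * deriv v s ^ 2) MeasureTheory.volume 0 1 :=
    (continuous_const.mul (hdvc.pow 2)).intervalIntegrable 0 1
  have hi2 : IntervalIntegrable (fun s => (-2 * β * (6 - 2 * β)) * (deriv v s * v s))
      MeasureTheory.volume 0 1 :=
    (continuous_const.mul (hdvc.mul hv.continuous)).intervalIntegrable 0 1
  have hi3 : IntervalIntegrable (fun s => (-2 * β * (3 - 2 * β)) * v s ^ 2)
      MeasureTheory.volume 0 1 :=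
    (continuous_const.mul (hv.continuous.pow 2)).intervalIntegrable 0 1
  have hsplit : (∫ s in (0:ℝ)..1, iteratedDeriv 3 f (x₀ s) * v s ^ 2)
      = (∫ s in (0:ℝ)..1, -6 * β * deriv v s ^ 2)
        + (∫ s in (0:ℝ)..1, (-2 * β * (6 - 2 * β)) * (deriv v s * v s))
        + (∫ s in (0:ℝ)..1, (-2 * β * (3 - 2 * β)) * v s ^ 2) := by
    rw [← intervalIntegral.integral_add hi1 hi2,
      ← intervalIntegral.integral_add (hi1.add hi2) hi3]
    exact intervalIntegral.integral_congr fun s _ => hpt s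
  -- cross term vanishes
  have hB : (∫ s in (0:ℝ)..1, deriv v s * v s) = 0 := by
    have hder : ∀ t ∈ Set.uIcc (0:ℝ) 1, HasDerivAt (fun t => v t ^ 2 / 2)
        (deriv v t * v t) t := by
      intro t _
      have h := ((hv t).hasDerivAt.pow 2).div_const 2
      exact h.congr_deriv (by norm_num; ring)
    have := intervalIntegral.integral_eq_sub_of_hasDerivAt hder
      ((hdvc.mul hv.continuous).intervalIntegrable 0 1)
    rw [this]
    have h10 : v 1 = v 0 := by simpa using hvper 0
    rw [h10]; ring
  -- v² integral positive
  have hC : 0 < ∫ s in (0:ℝ)..1, v s ^ 2 := by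
    obtain ⟨t, ht⟩ := not_forall.mp hvne
    have hper : Function.Periodic v 1 := hvper
    have hfr : v (Int.fract t) ≠ 0 := by
      rw [show Int.fract t = t - ⌊t⌋ from rfl]
      have h := hper.sub_int_mul_eq (x := t) (n := ⌊t⌋)
      simp only [mul_one] at h
      rw [h]; exact ht
    have hmem : Int.fract t ∈ Set.Icc (0:ℝ) 1 :=
      ⟨Int.fract_nonneg t, (Int.fract_lt_one t).le⟩
    refine intervalIntegral.integral_pos one_pos ?_ (fun x _ => sq_nonneg _) ?_
    · exact (hv.continuous.pow 2).continuousOn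
    · exact ⟨Int.fract t, hmem, by positivity⟩
  -- first integral nonpositive
  have hA : (∫ s in (0:ℝ)..1, -6 * β * deriv v s ^ 2) ≤ 0 := by
    rw [intervalIntegral.integral_const_mul]
    have h : 0 ≤ ∫ s in (0:ℝ)..1, deriv v s ^ 2 :=
      intervalIntegral.integral_nonneg (by norm_num) fun s _ => sq_nonneg _
    have : -6 * β ≤ 0 := by linarith
    exact mul_nonpos_of_nonpos_of_nonneg this h
  rw [hsplit, intervalIntegral.integral_const_mul, intervalIntegral.integral_const_mul,
    intervalIntegral.integral_const_mul, hB]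
  have hA' : 0 ≤ ∫ s in (0:ℝ)..1, deriv v s ^ 2 :=
    intervalIntegral.integral_nonneg (by norm_num) fun s _ => sq_nonneg _
  nlinarith [mul_nonneg (by linarith : (0:ℝ) ≤ 6 * β) hA',
    mul_pos (by nlinarith : (0:ℝ) < 2 * β * (3 - 2 * β)) hC]
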